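/- For all integers k ≥ 0 and d ≥ k − 1, ∑_{i=0}^{d} A(d+1,i) · (2i − d)^k = (d+1)! · k! · 2^k · g_k, where g_k is the coefficient of z^k in the formal power series G(z)^{d+2}, with G(z) = ∑_{t≥0} z^{2t}/(4^t · (2t+1)!). (Equivalently, for d ≥ k−1 the k-th central moment of the number of descents of a uniformly random permutation of {1,...,d+1} equals k! times the coefficient of z^k in ((e^{z/2} − e^{−z/2})/z)^{d+2}.) -/

import Mathlib

open Finset

/-- The number of descents of a permutation of `Fin n`. -/
def descentCount {n : ℕ} (σ : Equiv.Perm (Fin n)) : ℕ :=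
  (Finset.univ.filter fun i : Fin n =>
    ∃ h : (i : ℕ) + 1 < n, σ ⟨(i : ℕ) + 1, h⟩ < σ i).card

/-- The Eulerian number `A(n,k)`: the number of permutations of `{1,…,n}` with
exactly `k` descents. -/
def eulerian (n k : ℕ) : ℕ :=
  (Finset.univ.filter fun σ : Equiv.Perm (Fin n) => descentCount σ = k).card

/-- ℕ-indexed descent predicate. -/
def dN {n : ℕ} (σ : Equiv.Perm (Fin n)) (j : ℕ) : Prop :=
  ∃ h : j + 1 < n, σ ⟨j + 1, h⟩ < σ ⟨j, Nat.lt_of_succ_lt h⟩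

instance {n : ℕ} (σ : Equiv.Perm (Fin n)) (j : ℕ) : Decidable (dN σ j) := by
  unfold dN; infer_instance

lemma dN_lt {n : ℕ} {σ : Equiv.Perm (Fin n)} {j : ℕ} (h : dN σ j) : j + 1 < n := h.1

lemma descentCount_eq_sum {n : ℕ} (σ : Equiv.Perm (Fin n)) :
    descentCount σ = ∑ j ∈ range n, if dN σ j then 1 else 0 := by
  rw [descentCount, card_filter]
  rw [← Fin.sum_univ_eq_sum_range (fun j => if dN σ j then 1 else 0) n]
  exact Finset.sum_congr rfl fun i _ => rfl

section Insert
variable {n : ℕ}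

/-- Insert the largest value at position `p`. -/
def insFun (σ : Equiv.Perm (Fin n)) (p : Fin (n + 1)) : Fin (n + 1) → Fin (n + 1) :=
  p.insertNth (Fin.last n) (fun i => (σ i).castSucc)

lemma insFun_injective (σ : Equiv.Perm (Fin n)) (p : Fin (n + 1)) :
    Function.Injective (insFun σ p) := by
  intro a b hab
  rcases eq_or_ne a p with rfl | ha
  · rcases eq_or_ne b a with rfl | hb
    · rfl
    · exfalso
      obtain ⟨j, rfl⟩ := Fin.exists_succAbove_eq hb
      rw [insFun, Fin.insertNth_apply_same, Fin.insertNth_apply_succAbove] at hab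
      exact absurd hab.symm (Fin.castSucc_lt_last (σ j)).ne
  · rcases eq_or_ne b p with rfl | hb
    · exfalso
      obtain ⟨j, rfl⟩ := Fin.exists_succAbove_eq ha
      rw [insFun, Fin.insertNth_apply_same, Fin.insertNth_apply_succAbove] at hab
      exact absurd hab (Fin.castSucc_lt_last (σ j)).ne
    · obtain ⟨j, rfl⟩ := Fin.exists_succAbove_eq ha
      obtain ⟨j', rfl⟩ := Fin.exists_succAbove_eq hb
      rw [insFun, Fin.insertNth_apply_succAbove, Fin.insertNth_apply_succAbove] at hab
      rw [σ.injective (Fin.castSucc_injective n hab)]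

/-- Insertion as a permutation. -/
noncomputable def ins (σ : Equiv.Perm (Fin n)) (p : Fin (n + 1)) : Equiv.Perm (Fin (n + 1)) :=
  Equiv.ofBijective _ (Finite.injective_iff_bijective.mp (insFun_injective σ p))

lemma ins_apply (σ : Equiv.Perm (Fin n)) (p : Fin (n + 1)) (i : Fin (n + 1)) :
    ins σ p i = insFun σ p i := rfl

lemma ins_apply_same (σ : Equiv.Perm (Fin n)) (p : Fin (n + 1)) :
    ins σ p p = Fin.last n := by
  rw [ins_apply, insFun, Fin.insertNth_apply_same]

lemma ins_apply_lt (σ : Equiv.Perm (Fin n)) (p : Fin (n + 1)) {j : ℕ} (hj : j < n)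
    (hjp : j < (p : ℕ)) :
    ins σ p ⟨j, Nat.lt_succ_of_lt hj⟩ = (σ ⟨j, hj⟩).castSucc := by
  have h1 : (⟨j, Nat.lt_succ_of_lt hj⟩ : Fin (n+1)) = p.succAbove ⟨j, hj⟩ := by
    rw [Fin.succAbove_of_castSucc_lt]
    · rfl
    · rw [Fin.lt_def]; exact hjp
  rw [h1, ins_apply, insFun, Fin.insertNth_apply_succAbove]

lemma ins_apply_gt (σ : Equiv.Perm (Fin n)) (p : Fin (n + 1)) {j : ℕ} (hj : j < n)
    (hjp : (p : ℕ) ≤ j) :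
    ins σ p ⟨j + 1, Nat.succ_lt_succ hj⟩ = (σ ⟨j, hj⟩).castSucc := by
  have h1 : (⟨j + 1, Nat.succ_lt_succ hj⟩ : Fin (n+1)) = p.succAbove ⟨j, hj⟩ := by
    rw [Fin.succAbove_of_le_castSucc]
    · rfl
    · rw [Fin.le_def]; exact hjp
  rw [h1, ins_apply, insFun, Fin.insertNth_apply_succAbove]

end Insert

section Count
variable {n : ℕ}

/-- value of the word at position `j`, as a natural number. -/
def wv {m : ℕ} (τ : Equiv.Perm (Fin m)) (j : ℕ) : ℕ :=
  if h : j < m then ((τ ⟨j, h⟩ : Fin m) : ℕ) else 0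

lemma wv_lt {m : ℕ} (τ : Equiv.Perm (Fin m)) {j : ℕ} (h : j < m) : wv τ j < m := by
  rw [wv, dif_pos h]; exact (τ ⟨j, h⟩).isLt

lemma dN_iff_wv {σ : Equiv.Perm (Fin n)} {j : ℕ} :
    dN σ j ↔ j + 1 < n ∧ wv σ (j + 1) < wv σ j := by
  constructor
  · rintro ⟨h, hlt⟩
    refine ⟨h, ?_⟩
    rw [wv, wv, dif_pos h, dif_pos (Nat.lt_of_succ_lt h)]
    exact hlt
  · rintro ⟨h, hlt⟩
    refine ⟨h, ?_⟩
    rw [wv, wv, dif_pos h, dif_pos (Nat.lt_of_succ_lt h)] at hlt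
    exact hlt

variable (σ : Equiv.Perm (Fin n)) (p : Fin (n + 1))

lemma wv_ins_lt {j : ℕ} (hj : j < n) (hjp : j < (p : ℕ)) :
    wv (ins σ p) j = wv σ j := by
  rw [wv, wv, dif_pos (Nat.lt_succ_of_lt hj), dif_pos hj, ins_apply_lt σ p hj hjp,
    Fin.coe_castSucc]

lemma wv_ins_same : wv (ins σ p) (p : ℕ) = n := by
  have h : (p : ℕ) < n + 1 := p.isLt
  rw [wv, dif_pos h]
  have : (⟨(p : ℕ), h⟩ : Fin (n+1)) = p := Fin.eta p h
  rw [this, ins_apply_same, Fin.val_last]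

lemma wv_ins_gt {j : ℕ} (hj : j < n) (hjp : (p : ℕ) ≤ j) :
    wv (ins σ p) (j + 1) = wv σ j := by
  rw [wv, wv, dif_pos (Nat.succ_lt_succ hj), dif_pos hj, ins_apply_gt σ p hj hjp,
    Fin.coe_castSucc]

lemma dN_ins_of_lt {j : ℕ} (hjp : j + 1 < (p : ℕ)) (hp : (p : ℕ) ≤ n) :
    dN (ins σ p) j ↔ dN σ j := by
  rw [dN_iff_wv, dN_iff_wv, wv_ins_lt σ p (by omega) (by omega),
    wv_ins_lt σ p (by omega) (by omega)]
  omega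

lemma dN_ins_of_eq {j : ℕ} (hjp : j + 1 = (p : ℕ)) (hp : (p : ℕ) ≤ n) :
    ¬ dN (ins σ p) j := by
  rw [dN_iff_wv, wv_ins_lt σ p (j := j) (by omega) (by omega), hjp, wv_ins_same]
  have := wv_lt σ (j := j) (by omega)
  omega

lemma dN_ins_of_same : dN (ins σ p) (p : ℕ) ↔ (p : ℕ) < n := by
  constructor
  · rintro ⟨h, -⟩
    omega
  · intro h
    rw [dN_iff_wv, wv_ins_same, wv_ins_gt σ p h le_rfl]
    exact ⟨by omega, wv_lt σ h⟩

lemma dN_ins_of_gt {i : ℕ} (hip : (p : ℕ) ≤ i) :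
    dN (ins σ p) (i + 1) ↔ dN σ i := by
  by_cases h : i + 1 < n
  · rw [dN_iff_wv, dN_iff_wv, wv_ins_gt σ p h (by omega), wv_ins_gt σ p (by omega) hip]
    omega
  · constructor
    · rintro ⟨h2, -⟩; omega
    · rintro ⟨h2, -⟩; omega

lemma descentCount_ins :
    descentCount (ins σ p) + (if 1 ≤ (p : ℕ) ∧ dN σ ((p : ℕ) - 1) then 1 else 0)
      = descentCount σ + (if (p : ℕ) < n then 1 else 0) := by
  have hp : (p : ℕ) ≤ n := Nat.lt_succ_iff.mp p.isLt
  rw [descentCount_eq_sum, descentCount_eq_sum]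
  rw [range_eq_Ico, ← Finset.sum_Ico_consecutive (fun j => if dN (ins σ p) j then 1 else 0)
      (Nat.zero_le (p : ℕ)) (by omega : (p : ℕ) ≤ n + 1),
    Finset.sum_eq_sum_Ico_succ_bot (by omega : (p : ℕ) < n + 1)]
  have hA : (∑ j ∈ Finset.Ico 0 (p : ℕ), if dN (ins σ p) j then 1 else 0)
      = ∑ j ∈ Finset.Ico 0 (p : ℕ), if j + 1 < (p : ℕ) ∧ dN σ j then 1 else 0 := by
    refine Finset.sum_congr rfl fun j hj => ?_
    simp only [Finset.mem_Ico] at hj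
    rcases Nat.lt_or_ge (j + 1) (p : ℕ) with h | h
    · simp [dN_ins_of_lt σ p h hp, h]
    · have hje : j + 1 = (p : ℕ) := by omega
      rw [if_neg (dN_ins_of_eq σ p hje hp), if_neg]
      rintro ⟨hc, -⟩; omega
  have hB : (if dN (ins σ p) (p : ℕ) then (1 : ℕ) else 0) = if (p : ℕ) < n then 1 else 0 := by
    simp [dN_ins_of_same σ p]
  have hC : (∑ j ∈ Finset.Ico ((p : ℕ) + 1) (n + 1), if dN (ins σ p) j then 1 else 0)
      = ∑ j ∈ Finset.Ico (p : ℕ) n, if dN σ j then 1 else 0 := by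
    rw [Finset.sum_Ico_eq_sum_range, Finset.sum_Ico_eq_sum_range]
    have hnn : n + 1 - ((p : ℕ) + 1) = n - (p : ℕ) := by omega
    rw [hnn]
    refine Finset.sum_congr rfl fun i hi => ?_
    have h1 : (p : ℕ) + 1 + i = ((p : ℕ) + i) + 1 := by omega
    have h2 : dN (ins σ p) ((p : ℕ) + i + 1) ↔ dN σ ((p : ℕ) + i) :=
      dN_ins_of_gt σ p (by omega)
    simp only [h1, h2]
  rw [hA, hB, hC]
  rcases Nat.eq_zero_or_pos (p : ℕ) with hq | hq
  · rw [hq]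
    simp
    omega
  · obtain ⟨r, hr⟩ : ∃ r, (p : ℕ) = r + 1 := ⟨(p : ℕ) - 1, by omega⟩
    rw [hr] at hp ⊢
    have hsplit : (∑ j ∈ Finset.Ico 0 n, if dN σ j then 1 else 0)
        = (∑ j ∈ Finset.Ico 0 r, if dN σ j then 1 else 0)
          + ((if dN σ r then 1 else 0) + ∑ j ∈ Finset.Ico (r + 1) n, if dN σ j then 1 else 0) := by
      rw [← Finset.sum_Ico_consecutive (fun j => if dN σ j then 1 else 0)
          (Nat.zero_le r) (by omega : r ≤ n),
        Finset.sum_eq_sum_Ico_succ_bot (by omega : r < n)]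
    rw [range_eq_Ico, hsplit]
    have hA2 : (∑ j ∈ Finset.Ico 0 (r + 1), if j + 1 < r + 1 ∧ dN σ j then 1 else 0)
        = ∑ j ∈ Finset.Ico 0 r, if dN σ j then 1 else 0 := by
      rw [← range_eq_Ico, Finset.sum_range_succ]
      have h0 : (if r + 1 < r + 1 ∧ dN σ r then (1:ℕ) else 0) = 0 := by
        rw [if_neg]; rintro ⟨hc, -⟩; omega
      rw [h0, add_zero]
      refine Finset.sum_congr (show range r = Ico 0 r by rw [range_eq_Ico]) fun j hj => ?_
      simp only [Finset.mem_range, Finset.mem_Ico] at hj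
      have : j + 1 < r + 1 := by omega
      simp [this]
    rw [hA2]
    have hlast : (if 1 ≤ r + 1 ∧ dN σ (r + 1 - 1) then (1:ℕ) else 0) = if dN σ r then 1 else 0 := by
      simp
    rw [hlast]
    omega

end Count

section CountTwo
variable {n : ℕ}

def goodN (σ : Equiv.Perm (Fin n)) (q : ℕ) : Prop :=
  q < n ∧ ¬(1 ≤ q ∧ dN σ (q - 1))

instance (σ : Equiv.Perm (Fin n)) (q : ℕ) : Decidable (goodN σ q) := by
  unfold goodN; infer_instance

variable (σ : Equiv.Perm (Fin n))

lemma dc_ins_eq (p : Fin (n + 1)) :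
    descentCount (ins σ p) = descentCount σ + (if goodN σ (p : ℕ) then 1 else 0) := by
  have hk := descentCount_ins σ p
  by_cases hb : 1 ≤ (p : ℕ) ∧ dN σ ((p : ℕ) - 1)
  · have ha : (p : ℕ) < n := by
      have := dN_lt hb.2
      omega
    rw [if_pos hb, if_pos ha] at hk
    have : ¬ goodN σ (p : ℕ) := fun hg => hg.2 hb
    rw [if_neg this]
    omega
  · rw [if_neg hb] at hk
    by_cases ha : (p : ℕ) < n
    · rw [if_pos ha] at hk
      rw [if_pos ⟨ha, hb⟩]
      omega
    · rw [if_neg ha] at hk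
      rw [if_neg (fun hg => ha hg.1)]
      omega

lemma sum_ite_lt : (∑ q ∈ range (n + 1), if q < n then 1 else 0) = n := by
  rw [Finset.sum_range_succ, if_neg (lt_irrefl n), add_zero]
  rw [Finset.sum_congr rfl (fun q hq => if_pos (Finset.mem_range.mp hq))]
  simp

lemma sum_ite_b : (∑ q ∈ range (n + 1), if 1 ≤ q ∧ dN σ (q - 1) then 1 else 0)
    = descentCount σ := by
  rw [Finset.sum_range_succ', descentCount_eq_sum]
  have h0 : (if 1 ≤ 0 ∧ dN σ (0 - 1) then (1:ℕ) else 0) = 0 := by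
    rw [if_neg]; rintro ⟨hc, -⟩; omega
  rw [h0, add_zero]
  refine Finset.sum_congr rfl fun i _ => ?_
  simp

lemma card_good : (univ.filter fun p : Fin (n + 1) => goodN σ (p : ℕ)).card
    = n - descentCount σ := by
  rw [card_filter]
  rw [Fin.sum_univ_eq_sum_range (fun q => if goodN σ q then 1 else 0) (n + 1)]
  have key : (∑ q ∈ range (n + 1), if goodN σ q then 1 else 0)
      + (∑ q ∈ range (n + 1), if 1 ≤ q ∧ dN σ (q - 1) then 1 else 0)
      = ∑ q ∈ range (n + 1), if q < n then 1 else 0 := by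
    rw [← Finset.sum_add_distrib]
    refine Finset.sum_congr rfl fun q hq => ?_
    have hq' : q ≤ n := by simp only [Finset.mem_range] at hq; omega
    by_cases hb : 1 ≤ q ∧ dN σ (q - 1)
    · have hlt : q < n := by have := dN_lt hb.2; omega
      rw [if_pos hb, if_neg (fun hg : goodN σ q => hg.2 hb), if_pos hlt]
    · by_cases ha : q < n
      · have hg : goodN σ q := ⟨ha, hb⟩
        rw [if_neg hb, if_pos hg, if_pos ha]
      · rw [if_neg hb, if_neg (fun hg : goodN σ q => ha hg.1), if_neg ha]
  rw [sum_ite_lt, sum_ite_b] at key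
  omega

lemma dc_le : descentCount σ ≤ n - 1 := by
  rcases Nat.eq_zero_or_pos n with rfl | hn
  · rw [descentCount_eq_sum]; simp
  rw [descentCount_eq_sum]
  calc (∑ j ∈ range n, if dN σ j then 1 else 0)
      ≤ ∑ j ∈ range n, if j + 1 < n then 1 else 0 := by
        refine Finset.sum_le_sum fun j _ => ?_
        by_cases h : dN σ j
        · rw [if_pos h, if_pos (dN_lt h)]
        · rw [if_neg h]; exact Nat.zero_le _
    _ = n - 1 := by
        obtain ⟨m, rfl⟩ : ∃ m, n = m + 1 := ⟨n - 1, by omega⟩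
        have : ∀ j ∈ range (m + 1), (if j + 1 < m + 1 then (1:ℕ) else 0)
            = if j < m then 1 else 0 := by
          intro j _
          by_cases h : j < m
          · rw [if_pos (by omega), if_pos h]
          · rw [if_neg (by omega), if_neg h]
        rw [Finset.sum_congr rfl this, sum_ite_lt]
        omega

lemma card_notgood : (univ.filter fun p : Fin (n + 1) => ¬ goodN σ (p : ℕ)).card
    = descentCount σ + 1 := by
  have h1 := card_good σ
  have h2 : (univ.filter fun p : Fin (n + 1) => goodN σ (p : ℕ)).card
      + (univ.filter fun p : Fin (n + 1) => ¬ goodN σ (p : ℕ)).card = n + 1 := by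
    rw [Finset.card_filter_add_card_filter_not]
    simp
  have h3 := dc_le σ
  have h4 : descentCount σ ≤ n := by omega
  -- need: n - dc + x = n + 1 → x = dc + 1, valid since dc ≤ n
  omega

lemma sum_over_slots {M : Type*} [AddCommMonoid M] (x : ℕ → M) :
    (∑ p : Fin (n + 1), x (descentCount (ins σ p)))
      = (descentCount σ + 1) • x (descentCount σ)
        + (n - descentCount σ) • x (descentCount σ + 1) := by
  have : ∀ p : Fin (n + 1), x (descentCount (ins σ p))
      = if goodN σ (p : ℕ) then x (descentCount σ + 1) else x (descentCount σ) := by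
    intro p
    rw [dc_ins_eq σ p]
    by_cases h : goodN σ (p : ℕ)
    · rw [if_pos h, if_pos h]
    · rw [if_neg h, if_neg h, add_zero]
  rw [Finset.sum_congr rfl (fun p _ => this p)]
  rw [Finset.sum_ite, Finset.sum_const, Finset.sum_const, card_good, card_notgood]
  rw [add_comm]

end CountTwo

section Master
variable {n : ℕ}

lemma ins_injective :
    Function.Injective (fun z : Equiv.Perm (Fin n) × Fin (n + 1) => ins z.1 z.2) := by
  rintro ⟨σ, p⟩ ⟨σ', p'⟩ h
  simp only at h
  have hpp : p = p' := by
    by_contra hne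
    obtain ⟨j, hj⟩ := Fin.exists_succAbove_eq hne
    have h1 : ins σ p p = Fin.last n := ins_apply_same σ p
    have h2 : ins σ' p' p = (σ' j).castSucc := by
      rw [← hj, ins_apply, insFun, Fin.insertNth_apply_succAbove]
    rw [h] at h1
    rw [h1] at h2
    exact absurd h2.symm (Fin.castSucc_lt_last (σ' j)).ne
  subst hpp
  have hσ : σ = σ' := by
    apply Equiv.ext
    intro i
    have h1 : ins σ p (p.succAbove i) = (σ i).castSucc := by
      rw [ins_apply, insFun, Fin.insertNth_apply_succAbove]
    have h2 : ins σ' p (p.succAbove i) = (σ' i).castSucc := by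
      rw [ins_apply, insFun, Fin.insertNth_apply_succAbove]
    rw [h] at h1
    rw [h1] at h2
    exact Fin.castSucc_injective n h2
  rw [hσ]

lemma ins_bijective :
    Function.Bijective (fun z : Equiv.Perm (Fin n) × Fin (n + 1) => ins z.1 z.2) := by
  rw [Fintype.bijective_iff_injective_and_card]
  refine ⟨ins_injective, ?_⟩
  rw [Fintype.card_prod, Fintype.card_perm, Fintype.card_perm, Fintype.card_fin,
    Fintype.card_fin]
  rw [Nat.factorial_succ, Nat.mul_comm]

lemma perm_sum_eq {M : Type*} [AddCommMonoid M] (m R : ℕ)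
    (hR : ∀ τ : Equiv.Perm (Fin m), descentCount τ < R) (x : ℕ → M) :
    (∑ τ : Equiv.Perm (Fin m), x (descentCount τ)) = ∑ i ∈ range R, eulerian m i • x i := by
  rw [Finset.sum_comp x descentCount]
  refine Finset.sum_subset ?_ ?_
  · intro b hb
    obtain ⟨τ, -, rfl⟩ := Finset.mem_image.mp hb
    exact Finset.mem_range.mpr (hR τ)
  · intro b _ hb
    have : eulerian m b = 0 := by
      rw [eulerian, Finset.card_eq_zero, Finset.filter_eq_empty_iff]
      intro τ _
      exact fun hc => hb (Finset.mem_image.mpr ⟨τ, Finset.mem_univ τ, hc⟩)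
    rw [show (Finset.filter (fun a => descentCount a = b) univ).card = eulerian m b from rfl,
      this, zero_smul]

lemma dc_lt_card {m : ℕ} (τ : Equiv.Perm (Fin (m + 1))) : descentCount τ < m + 1 := by
  have := dc_le τ
  omega

lemma master {M : Type*} [AddCommMonoid M] (x : ℕ → M) :
    (∑ i ∈ range (n + 2), eulerian (n + 2) i • x i)
      = ∑ i ∈ range (n + 1), eulerian (n + 1) i
          • ((i + 1) • x i + ((n + 1) - i) • x (i + 1)) := by
  rw [← perm_sum_eq (n + 2) (n + 2) dc_lt_card x]
  rw [← perm_sum_eq (n + 1) (n + 1) dc_lt_card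
      (fun w => (w + 1) • x w + ((n + 1) - w) • x (w + 1))]
  rw [← Fintype.sum_bijective _ ins_bijective
      (fun z : Equiv.Perm (Fin (n + 1)) × Fin (n + 2) => x (descentCount (ins z.1 z.2)))
      (fun τ => x (descentCount τ)) (fun z => rfl)]
  rw [Fintype.sum_prod_type]
  refine Finset.sum_congr rfl fun σ _ => ?_
  rw [sum_over_slots σ x]

end Master

section Series
open PowerSeries

noncomputable def Eexp (c : ℚ) : PowerSeries ℚ := PowerSeries.mk fun k => c ^ k / k.factorial

noncomputable def Gs : PowerSeries ℚ :=
  PowerSeries.mk fun n =>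
    if Even n then (1 : ℚ) / (4 ^ (n / 2) * (Nat.factorial (n + 1) : ℚ)) else 0

noncomputable def Cc : PowerSeries ℚ :=
  PowerSeries.mk fun n =>
    if Even n then (1 : ℚ) / (4 ^ (n / 2) * (Nat.factorial n : ℚ)) else 0

lemma Eexp_mul (a b : ℚ) : Eexp a * Eexp b = Eexp (a + b) := by
  ext n
  rw [PowerSeries.coeff_mul, Eexp, Eexp, Eexp]
  simp only [PowerSeries.coeff_mk]
  rw [Finset.Nat.sum_antidiagonal_eq_sum_range_succ_mk]
  rw [add_pow, Finset.sum_div]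
  refine Finset.sum_congr rfl fun i hi => ?_
  have hin : i ≤ n := Nat.lt_succ_iff.mp (Finset.mem_range.mp hi)
  have hfac := Nat.choose_mul_factorial_mul_factorial hin
  have hfacq : ((n.choose i : ℚ)) * (i.factorial : ℚ) * ((n - i).factorial : ℚ)
      = (n.factorial : ℚ) := by exact_mod_cast congrArg (Nat.cast (R := ℚ)) hfac
  have h1 : (i.factorial : ℚ) ≠ 0 := Nat.cast_ne_zero.mpr (Nat.factorial_ne_zero i)
  have h2 : ((n - i).factorial : ℚ) ≠ 0 := Nat.cast_ne_zero.mpr (Nat.factorial_ne_zero _)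
  have h3 : (n.factorial : ℚ) ≠ 0 := Nat.cast_ne_zero.mpr (Nat.factorial_ne_zero n)
  rw [div_mul_div_comm, div_eq_div_iff (mul_ne_zero h1 h2) h3]
  linear_combination (-(a ^ i * b ^ (n - i))) * hfacq

lemma Eexp_zero : Eexp 0 = 1 := by
  ext n
  rw [Eexp, PowerSeries.coeff_mk, PowerSeries.coeff_one]
  rcases Nat.eq_zero_or_pos n with rfl | hn
  · simp
  · rw [if_neg (by omega), zero_pow (by omega), zero_div]

lemma deriv_Eexp (c : ℚ) : PowerSeries.derivative ℚ (Eexp c) = c • Eexp c := by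
  ext n
  rw [PowerSeries.coeff_derivative, PowerSeries.coeff_smul, Eexp, PowerSeries.coeff_mk,
    PowerSeries.coeff_mk, Nat.factorial_succ, pow_succ]
  push_cast
  have h1 : (n.factorial : ℚ) ≠ 0 := Nat.cast_ne_zero.mpr (Nat.factorial_ne_zero n)
  field_simp
  ring_nf
  simp [h1]

lemma four_pow_half {m : ℕ} (hm : Even m) : ((4 : ℚ) ^ (m / 2)) = 2 ^ m := by
  obtain ⟨t, rfl⟩ := hm
  have : (t + t) / 2 = t := by omega
  rw [this, show (4:ℚ) = 2^2 by norm_num, ← pow_mul]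
  congr 1
  omega

lemma Eexp_sub_eq : Eexp (1/2) - Eexp (-(1/2)) = PowerSeries.X * Gs := by
  ext n
  rw [map_sub, Eexp, Eexp, PowerSeries.coeff_mk, PowerSeries.coeff_mk]
  rcases Nat.eq_zero_or_pos n with rfl | hn
  · simp [Gs]
  obtain ⟨m, rfl⟩ : ∃ m, n = m + 1 := ⟨n - 1, by omega⟩
  rw [PowerSeries.coeff_succ_X_mul, Gs, PowerSeries.coeff_mk]
  rw [neg_pow]
  by_cases hm : Even m
  · rw [if_pos hm]
    have hodd : Odd (m + 1) := Even.add_one hm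
    rw [hodd.neg_one_pow, four_pow_half hm]
    have h1 : ((m+1).factorial : ℚ) ≠ 0 := Nat.cast_ne_zero.mpr (Nat.factorial_ne_zero _)
    have h2 : (2:ℚ) ^ m ≠ 0 := by positivity
    field_simp
    ring_nf
    rw [← mul_pow]; norm_num
  · rw [if_neg hm]
    have heven : Even (m + 1) := Nat.even_add_one.mpr hm
    rw [heven.neg_one_pow]
    ring

end Series

section Series2
open PowerSeries

lemma Cc_eq : Cc = (1/2 : ℚ) • (Eexp (1/2) + Eexp (-(1/2))) := by
  ext n
  rw [PowerSeries.coeff_smul, map_add, Eexp, Eexp, PowerSeries.coeff_mk,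
    PowerSeries.coeff_mk, Cc, PowerSeries.coeff_mk, neg_pow, smul_eq_mul]
  have h1 : ((n).factorial : ℚ) ≠ 0 := Nat.cast_ne_zero.mpr (Nat.factorial_ne_zero _)
  by_cases hm : Even n
  · rw [if_pos hm, hm.neg_one_pow, four_pow_half hm]
    have h2 : (2:ℚ) ^ n ≠ 0 := by positivity
    rw [show (1:ℚ)/2 = (2:ℚ)⁻¹ by norm_num, inv_pow]
    field_simp
    norm_num
  · rw [if_neg hm, (Nat.odd_iff.mpr (Nat.not_even_iff.mp hm)).neg_one_pow]
    ring

lemma Cc_eq_G : Cc = Gs + PowerSeries.X * PowerSeries.derivative ℚ Gs := by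
  ext n
  rw [map_add, Cc, PowerSeries.coeff_mk, Gs]
  rcases Nat.eq_zero_or_pos n with rfl | hn
  · rw [PowerSeries.coeff_mk]
    simp
  obtain ⟨m, rfl⟩ : ∃ m, n = m + 1 := ⟨n - 1, by omega⟩
  rw [PowerSeries.coeff_succ_X_mul, PowerSeries.coeff_derivative, PowerSeries.coeff_mk]
  by_cases hm : Even (m + 1)
  · rw [if_pos hm, if_pos hm]
    have h1 : ((m+1).factorial : ℚ) ≠ 0 := Nat.cast_ne_zero.mpr (Nat.factorial_ne_zero _)
    have h4 : ((4:ℚ)) ^ ((m+1) / 2) ≠ 0 := by positivity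
    rw [Nat.factorial_succ (m+1)]
    push_cast
    field_simp
    ring
  · rw [if_neg hm, if_neg hm]
    ring

noncomputable def Phi (d : ℕ) : PowerSeries ℚ :=
  ∑ i ∈ range (d + 1), (eulerian (d + 1) i : ℚ) • Eexp ((2 * (i : ℚ) - (d : ℚ)) / 2)

lemma eulerian_one_zero : eulerian 1 0 = 1 := by
  rw [eulerian]
  have h : ∀ σ : Equiv.Perm (Fin 1), descentCount σ = 0 := fun σ => by
    have := dc_le σ
    omega
  rw [Finset.filter_true_of_mem (fun σ _ => h σ), Finset.card_univ, Fintype.card_perm]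
  simp

lemma Phi_zero : Phi 0 = 1 := by
  rw [Phi]
  rw [Finset.sum_range_one, eulerian_one_zero]
  norm_num
  exact Eexp_zero

end Series2

section Series3
open PowerSeries

lemma per_i (d i : ℕ) (hi : i ≤ d) :
    (i + 1) • Eexp ((2 * (i : ℚ) - ((d : ℚ) + 1)) / 2)
      + ((d + 1) - i) • Eexp ((2 * ((i : ℚ) + 1) - ((d : ℚ) + 1)) / 2)
      = ((d : ℚ) + 2) • (Cc * Eexp ((2 * (i : ℚ) - (d : ℚ)) / 2))
        - PowerSeries.X * Gs
          * (((2 * (i : ℚ) - (d : ℚ)) / 2) • Eexp ((2 * (i : ℚ) - (d : ℚ)) / 2)) := by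
  have hA : Eexp ((2 * (i : ℚ) - ((d : ℚ) + 1)) / 2)
      = Eexp (-(1/2)) * Eexp ((2 * (i : ℚ) - (d : ℚ)) / 2) := by
    rw [Eexp_mul]; congr 1; ring
  have hB : Eexp ((2 * ((i : ℚ) + 1) - ((d : ℚ) + 1)) / 2)
      = Eexp (1/2) * Eexp ((2 * (i : ℚ) - (d : ℚ)) / 2) := by
    rw [Eexp_mul]; congr 1; ring
  rw [hA, hB, Cc_eq, ← Eexp_sub_eq]
  rw [← Nat.cast_smul_eq_nsmul ℚ (i + 1), ← Nat.cast_smul_eq_nsmul ℚ ((d + 1) - i)]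
  have hc1 : (((i + 1 : ℕ)) : ℚ) = (i : ℚ) + 1 := by push_cast; ring
  have hc2 : ((((d + 1) - i : ℕ)) : ℚ) = (d : ℚ) + 1 - (i : ℚ) := by
    rw [Nat.cast_sub (by omega)]; push_cast; ring
  rw [hc1, hc2]
  rw [smul_mul_assoc, add_mul, mul_smul_comm, sub_mul]
  module

lemma Phi_succ (d : ℕ) :
    Phi (d + 1) = ((d : ℚ) + 2) • (Cc * Phi d)
      - PowerSeries.X * Gs * PowerSeries.derivative ℚ (Phi d) := by
  have hL : Phi (d + 1)
      = ∑ i ∈ range (d + 2), eulerian (d + 2) i • Eexp ((2 * (i : ℚ) - ((d : ℚ) + 1)) / 2) := by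
    rw [Phi]
    refine Finset.sum_congr rfl fun i _ => ?_
    rw [← Nat.cast_smul_eq_nsmul ℚ]
    congr 2
    push_cast; ring
  rw [hL, master (fun i => Eexp ((2 * (i : ℚ) - ((d : ℚ) + 1)) / 2))]
  rw [Phi, Finset.mul_sum, Finset.smul_sum, map_sum, Finset.mul_sum, ← Finset.sum_sub_distrib]
  refine Finset.sum_congr rfl fun i hi => ?_
  have hid : i ≤ d := by simpa [Nat.lt_succ_iff] using Finset.mem_range.mp hi
  rw [mul_smul_comm, smul_comm ((d : ℚ) + 2), Derivation.map_smul, mul_smul_comm, ← smul_sub,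
    ← Nat.cast_smul_eq_nsmul ℚ (eulerian (d + 1) i)]
  congr 1
  rw [deriv_Eexp]
  push_cast
  exact per_i d i hid

end Series3

section Series4
open PowerSeries

lemma Gs_sq_low : ∀ m < 2, PowerSeries.coeff (R := ℚ) m (Phi 0 - ((Nat.factorial 1 : ℚ)) • Gs ^ 2) = 0 := by
  have h0 : PowerSeries.coeff (R := ℚ) 0 Gs = 1 := by
    rw [Gs, PowerSeries.coeff_mk]
    norm_num
  have h1 : PowerSeries.coeff (R := ℚ) 1 Gs = 0 := by
    rw [Gs, PowerSeries.coeff_mk]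
    norm_num
  intro m hm
  rw [Phi_zero, map_sub, PowerSeries.coeff_smul, pow_two, PowerSeries.coeff_mul]
  rcases m with _ | _ | m
  · rw [Finset.Nat.sum_antidiagonal_eq_sum_range_succ_mk, Finset.sum_range_one]
    simp [h0]
  · rw [Finset.Nat.sum_antidiagonal_eq_sum_range_succ_mk, Finset.sum_range_succ,
      Finset.sum_range_one]
    simp [h0, h1]
  · omega

lemma key_dvd (d : ℕ) :
    (PowerSeries.X : PowerSeries ℚ) ^ (d + 2)
      ∣ Phi d - ((Nat.factorial (d + 1) : ℚ)) • Gs ^ (d + 2) := by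
  induction d with
  | zero => exact (PowerSeries.X_pow_dvd_iff).mpr Gs_sq_low
  | succ d ih =>
    obtain ⟨Ψ, hΨ⟩ := ih
    have hPhi : Phi d = ((Nat.factorial (d + 1) : ℚ)) • Gs ^ (d + 2)
        + PowerSeries.X ^ (d + 2) * Ψ := by
      rw [← hΨ]; ring
    refine Dvd.intro (((d : ℚ) + 2) • (PowerSeries.derivative ℚ Gs * Ψ)
      - Gs * PowerSeries.derivative ℚ Ψ) ?_
    rw [Phi_succ, hPhi]
    rw [map_add, Derivation.map_smul, Derivation.leibniz_pow, Derivation.leibniz,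
      Derivation.leibniz_pow, PowerSeries.derivative_X, Cc_eq_G]
    have hfac : ((Nat.factorial (d + 2) : ℚ)) = ((d : ℚ) + 2) * ((Nat.factorial (d + 1) : ℚ)) := by
      rw [show d + 2 = (d + 1) + 1 from rfl, Nat.factorial_succ]
      push_cast; ring
    rw [hfac]
    -- turn all smuls into multiplications
    have hns : ∀ (m : ℕ) (f : PowerSeries ℚ), m • f = PowerSeries.C (R := ℚ) (m : ℚ) * f := by
      intro m f
      rw [← Nat.cast_smul_eq_nsmul ℚ m f, PowerSeries.smul_eq_C_mul]
    simp only [smul_eq_mul, PowerSeries.smul_eq_C_mul, hns, map_add, map_mul, map_sub, map_one,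
      Nat.cast_add, Nat.cast_ofNat, Nat.cast_one, map_natCast]
    push_cast
    ring
end Series4


/-- For `d ≥ k − 1`, the `k`-th central moment (scaled by `2^k`) of the
descent statistic equals `k! · 2^k` times the coefficient of `z^k` in
`((e^{z/2} − e^{−z/2})/z)^{d+2}`. -/
theorem stmt6 (k d : ℕ) (h : k ≤ d + 1) :
    (∑ i ∈ Finset.range (d + 1), (eulerian (d + 1) i : ℚ) * (2 * (i : ℚ) - (d : ℚ)) ^ k)
      = (Nat.factorial (d + 1) : ℚ) * (Nat.factorial k : ℚ) * 2 ^ k *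
        PowerSeries.coeff (R := ℚ) k
          ((PowerSeries.mk fun n =>
              if Even n then (1 : ℚ) / (4 ^ (n / 2) * (Nat.factorial (n + 1) : ℚ)) else 0) ^
            (d + 2)) := by
  have hGs : (PowerSeries.mk fun n =>
      if Even n then (1 : ℚ) / (4 ^ (n / 2) * (Nat.factorial (n + 1) : ℚ)) else 0) = Gs := rfl
  rw [hGs]
  have hco : PowerSeries.coeff (R := ℚ) k (Phi d)
      = PowerSeries.coeff (R := ℚ) k (((Nat.factorial (d + 1) : ℚ)) • Gs ^ (d + 2)) := by
    have h2 := (PowerSeries.X_pow_dvd_iff.mp (key_dvd d)) k (by omega)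
    rw [map_sub] at h2
    exact sub_eq_zero.mp h2
  have hPhiCoeff : PowerSeries.coeff (R := ℚ) k (Phi d)
      = ∑ i ∈ Finset.range (d + 1),
          (eulerian (d + 1) i : ℚ) * ((2 * (i : ℚ) - (d : ℚ)) / 2) ^ k / (Nat.factorial k : ℚ) := by
    rw [Phi, map_sum]
    refine Finset.sum_congr rfl fun i _ => ?_
    rw [PowerSeries.coeff_smul, Eexp, PowerSeries.coeff_mk, smul_eq_mul, mul_div_assoc]
  have hmain : (∑ i ∈ Finset.range (d + 1),
        (eulerian (d + 1) i : ℚ) * ((2 * (i : ℚ) - (d : ℚ)) / 2) ^ k / (Nat.factorial k : ℚ))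
      = (Nat.factorial (d + 1) : ℚ) * PowerSeries.coeff (R := ℚ) k (Gs ^ (d + 2)) := by
    rw [← hPhiCoeff, hco, PowerSeries.coeff_smul, smul_eq_mul]
  have hk : (Nat.factorial k : ℚ) ≠ 0 := Nat.cast_ne_zero.mpr (Nat.factorial_ne_zero k)
  have h2k : (2 : ℚ) ^ k ≠ 0 := by positivity
  calc (∑ i ∈ Finset.range (d + 1), (eulerian (d + 1) i : ℚ) * (2 * (i : ℚ) - (d : ℚ)) ^ k)
      = (Nat.factorial k : ℚ) * 2 ^ k * (∑ i ∈ Finset.range (d + 1),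
          (eulerian (d + 1) i : ℚ) * ((2 * (i : ℚ) - (d : ℚ)) / 2) ^ k
            / (Nat.factorial k : ℚ)) := by
        rw [Finset.mul_sum]
        refine Finset.sum_congr rfl fun i _ => ?_
        rw [div_pow]
        field_simp
    _ = (Nat.factorial k : ℚ) * 2 ^ k
          * ((Nat.factorial (d + 1) : ℚ) * PowerSeries.coeff (R := ℚ) k (Gs ^ (d + 2))) := by
        rw [hmain]
    _ = (Nat.factorial (d + 1) : ℚ) * (Nat.factorial k : ℚ) * 2 ^ k
          * PowerSeries.coeff (R := ℚ) k (Gs ^ (d + 2)) := by ring
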